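/- A sequence of attacks (z_1,...,z_n) at unit time intervals can be fully defended by a team of defenders if and only if the reversed sequence (z_n,...,z_1) can be fully defended by the same team. -/
import Mathlib


/-- Defenders with speeds `v` (moving at most `v i` per unit time, starting
anywhere) can thwart every attack of the sequence `z`, where attack `j`
occurs at position `z j` at time `j + 1`. -/
def FullyDefended {X : Type*} [MetricSpace X] {m n : ℕ} (v : Fin m → ℝ)
    (z : Fin n → X) : Prop :=
  ∃ traj : Fin m → ℕ → X,
    (∀ (i : Fin m) (t : ℕ), dist (traj i t) (traj i (t + 1)) ≤ v i) ∧
    (∀ j : Fin n, ∃ i : Fin m, traj i (j + 1) = z j)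

theorem defend_reverse_of_defend {X : Type*} [MetricSpace X] {m n : ℕ}
    (v : Fin m → ℝ) (z : Fin n → X) (h : FullyDefended v z) :
    FullyDefended v (fun j => z j.rev) := by
  obtain ⟨traj, hstep, hhit⟩ := h
  refine ⟨fun i t => traj i (n + 1 - min t (n + 1)), ?_, ?_⟩
  · intro i t
    dsimp only
    rcases le_or_gt (n + 1) t with ht | ht
    · have h1 : min t (n + 1) = n + 1 := min_eq_right ht
      have h2 : min (t + 1) (n + 1) = n + 1 := min_eq_right (le_trans ht (Nat.le_succ t))
      rw [h1, h2]
      simpa using le_trans dist_nonneg (hstep i 0)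
    · have htn : t ≤ n := Nat.lt_succ_iff.mp ht
      have h1 : min t (n + 1) = t := min_eq_left (le_of_lt ht)
      have h2 : min (t + 1) (n + 1) = t + 1 := min_eq_left (Nat.succ_le_succ htn)
      rw [h1, h2]
      have : n + 1 - t = (n - t) + 1 := by omega
      rw [this]
      have : n + 1 - (t + 1) = n - t := by omega
      rw [this, dist_comm]
      exact hstep i (n - t)
  · intro j
    obtain ⟨i, hi⟩ := hhit j.rev
    refine ⟨i, ?_⟩
    dsimp only
    have hj : (j : ℕ) + 1 ≤ n := j.2
    have h1 : min ((j : ℕ) + 1) (n + 1) = (j : ℕ) + 1 :=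
      min_eq_left (le_trans hj (Nat.le_succ n))
    have hrev : (j.rev : ℕ) = n - ((j : ℕ) + 1) := Fin.val_rev j
    have h2 : n + 1 - ((j : ℕ) + 1) = (j.rev : ℕ) + 1 := by omega
    simp only [h1, h2]
    exact hi

/-- A sequence of attacks at unit time intervals can be fully defended iff the
reversed sequence can be fully defended by the same team. -/
theorem defend_iff_defend_reverse {X : Type*} [MetricSpace X] {m n : ℕ}
    (v : Fin m → ℝ) (z : Fin n → X) :
    FullyDefended v z ↔ FullyDefended v (fun j => z j.rev) := by
  constructor
  · exact defend_reverse_of_defend v z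
  · intro h
    have := defend_reverse_of_defend v (fun j => z j.rev) h
    simpa [Fin.rev_rev] using this
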